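/- The 5-uniform hypergraph H on V = {1,...,20} with hyperedges E = { {1,2,3,4,5}, {6,7,8,9,10}, {11,12,13,14,15}, {16,17,18,19,20}, {4,5,6,18,19}, {9,10,11,3,4}, {14,15,16,8,9}, {19,20,1,13,14}, {5,6,7,12,13}, {10,11,12,17,18}, {15,16,17,2,3}, {20,1,2,7,8} } satisfies EI(H) = C_20 and has exactly 12 = 3·20/5 hyperedges, which is minimum among all 5-uniform hypergraphs whose edge intersection hypergraph is C_20. -/
import Mathlib


open Finset

/-- Edge intersection hypergraph of a hypergraph with edge set `E` on vertex set `Fin n`. -/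
def EIh {n : ℕ} (E : Finset (Finset (Fin n))) : Finset (Finset (Fin n)) :=
  ((E ×ˢ E).filter fun p => p.1 ≠ p.2 ∧ 2 ≤ (p.1 ∩ p.2).card).image fun p => p.1 ∩ p.2

/-- The edge set of the cycle `C_n` on vertex set `Fin n`. -/
def cyc (n : ℕ) [NeZero n] : Finset (Finset (Fin n)) :=
  Finset.univ.image fun i : Fin n => ({i, i + 1} : Finset (Fin n))

/-- Degree of a vertex in a hypergraph. -/
def hdeg {n : ℕ} (E : Finset (Finset (Fin n))) (v : Fin n) : ℕ :=
  (E.filter fun e => v ∈ e).card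

lemma mem_EIh' {n : ℕ} {E : Finset (Finset (Fin n))} {s : Finset (Fin n)} :
    s ∈ EIh E ↔ ∃ e1 ∈ E, ∃ e2 ∈ E, e1 ≠ e2 ∧ 2 ≤ (e1 ∩ e2).card ∧ e1 ∩ e2 = s := by
  simp only [EIh, Finset.mem_image, Finset.mem_filter, Finset.mem_product, Prod.exists]
  aesop

lemma deg3' (E' : Finset (Finset (Fin 20))) (h : EIh E' = cyc 20) (v : Fin 20) :
    3 ≤ hdeg E' v := by
  have hne : ∀ w : Fin 20, ({w - 1, w} : Finset (Fin 20)) ≠ {w, w + 1} := by decide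
  have h1 : ({v - 1, v} : Finset (Fin 20)) ∈ EIh E' := by
    rw [h, cyc, Finset.mem_image]
    exact ⟨v - 1, Finset.mem_univ _, by rw [sub_add_cancel]⟩
  have h2 : ({v, v + 1} : Finset (Fin 20)) ∈ EIh E' := by
    rw [h, cyc, Finset.mem_image]
    exact ⟨v, Finset.mem_univ _, rfl⟩
  rw [mem_EIh'] at h1 h2
  obtain ⟨a, ha, b, hb, hab, -, hiab⟩ := h1
  obtain ⟨c, hc, d, hd, hcd, -, hicd⟩ := h2
  have hva : v ∈ a ∧ v ∈ b := by
    have : v ∈ a ∩ b := by rw [hiab]; simp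
    exact ⟨(Finset.mem_inter.1 this).1, (Finset.mem_inter.1 this).2⟩
  have hvc : v ∈ c ∧ v ∈ d := by
    have : v ∈ c ∩ d := by rw [hicd]; simp
    exact ⟨(Finset.mem_inter.1 this).1, (Finset.mem_inter.1 this).2⟩
  have hS : ∀ e, e ∈ E' → v ∈ e → e ∈ E'.filter fun e => v ∈ e := by
    intro e he hv; exact Finset.mem_filter.2 ⟨he, hv⟩
  rw [hdeg, show (3:ℕ) = 2 + 1 by rfl, Nat.add_one_le_iff, Finset.two_lt_card]
  by_cases hc1 : c = a
  · by_cases hd1 : d = b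
    · exact absurd (hiab.symm.trans (by rw [← hc1, ← hd1, hicd])) (hne v)
    · have hd2 : d ≠ a := fun hh => hcd (hc1.trans hh.symm)
      exact ⟨a, hS a ha hva.1, b, hS b hb hva.2, d, hS d hd hvc.2, hab,
        fun hh => hd2 hh.symm, fun hh => hd1 hh.symm⟩
  · by_cases hc2 : c = b
    · by_cases hd1 : d = a
      · refine absurd (hiab.symm.trans ?_) (hne v)
        rw [← hicd, hc2, hd1, Finset.inter_comm]
      · have hd2 : d ≠ b := fun hh => hcd (hc2.trans hh.symm)
        exact ⟨a, hS a ha hva.1, b, hS b hb hva.2, d, hS d hd hvc.2, hab,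
          fun hh => hd1 hh.symm, fun hh => hd2 hh.symm⟩
    · exact ⟨a, hS a ha hva.1, b, hS b hb hva.2, c, hS c hc hvc.1, hab,
        fun hh => hc1 hh.symm, fun hh => hc2 hh.symm⟩

lemma lower' (E' : Finset (Finset (Fin 20))) (h5 : ∀ e ∈ E', e.card = 5)
    (h : EIh E' = cyc 20) : 12 ≤ E'.card := by
  have hdc : ∑ v : Fin 20, hdeg E' v = ∑ e ∈ E', e.card := by
    simp only [hdeg, Finset.card_filter]
    rw [Finset.sum_comm]
    refine Finset.sum_congr rfl fun e _ => ?_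
    rw [← Finset.card_filter, Finset.filter_mem_eq_inter, Finset.univ_inter]
  have h60 : 60 ≤ ∑ v : Fin 20, hdeg E' v := by
    calc (60:ℕ) = ∑ _v : Fin 20, 3 := by simp
    _ ≤ ∑ v : Fin 20, hdeg E' v := Finset.sum_le_sum fun v _ => deg3' E' h v
  have h5s : ∑ e ∈ E', e.card = 5 * E'.card := by
    rw [Finset.sum_congr rfl h5, Finset.sum_const, smul_eq_mul, mul_comm]
  omega

theorem stmt_16 :
    letI E : Finset (Finset (Fin 20)) :=
      { {1,2,3,4,5}, {6,7,8,9,10}, {11,12,13,14,15}, {16,17,18,19,20},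
        {4,5,6,18,19}, {9,10,11,3,4}, {14,15,16,8,9}, {19,20,1,13,14},
        {5,6,7,12,13}, {10,11,12,17,18}, {15,16,17,2,3}, {20,1,2,7,8} }
    EIh E = cyc 20 ∧ E.card = 12 ∧
      (∀ E' : Finset (Finset (Fin 20)), (∀ e ∈ E', e.card = 5) → EIh E' = cyc 20 →
        12 ≤ E'.card) := by
  refine ⟨by decide, by decide, fun E' h5 h => lower' E' h5 h⟩
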